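/- Let Ωᵢ = B̄(ωᵢ; rᵢ) (i = 1, …, n, n > 1) be closed balls with possibly different radii rᵢ ≥ 0 in a Hilbert space X with ⋂ᵢ Ωᵢ = ∅. Then D(x) = max_i d(x, Ωᵢ) = max_i (‖x − ωᵢ‖ − rᵢ), and D has a unique minimizer on X. -/

import Mathlib

open Metric Filter

section aux

variable {X : Type*} [NormedAddCommGroup X] [NormedSpace ℝ X]

lemma aux_lower (c x : X) {R : ℝ} (hR : 0 ≤ R) :
    ‖x - c‖ - R ≤ Metric.infDist x (Metric.closedBall c R) := by
  by_contra hcon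
  push_neg at hcon
  obtain ⟨z, hz, hlt⟩ :=
    (Metric.infDist_lt_iff (Metric.nonempty_closedBall.2 hR)).1 hcon
  rw [Metric.mem_closedBall] at hz
  have h := dist_triangle x z c
  rw [dist_eq_norm x c] at h
  linarith

lemma aux_upper (c x : X) {R : ℝ} (hR : 0 ≤ R) :
    Metric.infDist x (Metric.closedBall c R) ≤ max (‖x - c‖ - R) 0 := by
  by_cases h : ‖x - c‖ ≤ R
  · have hx : x ∈ Metric.closedBall c R := by
      rwa [Metric.mem_closedBall, dist_eq_norm]
    simpa [Metric.infDist_zero_of_mem hx] using le_max_right _ 0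
  · push_neg at h
    have hnorm : 0 < ‖x - c‖ := lt_of_le_of_lt hR h
    set z : X := c + (R / ‖x - c‖) • (x - c) with hz
    have hzmem : z ∈ Metric.closedBall c R := by
      rw [Metric.mem_closedBall, dist_eq_norm]
      have : z - c = (R / ‖x - c‖) • (x - c) := by rw [hz]; abel
      rw [this, norm_smul, Real.norm_eq_abs, abs_of_nonneg (div_nonneg hR hnorm.le)]
      rw [div_mul_cancel₀ _ hnorm.ne']
    have hdist : dist x z = ‖x - c‖ - R := by
      rw [dist_eq_norm]
      have : x - z = (1 - R / ‖x - c‖) • (x - c) := by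
        rw [hz, sub_smul, one_smul]; abel
      rw [this, norm_smul, Real.norm_eq_abs,
        abs_of_nonneg (by rw [sub_nonneg]; exact (div_le_one hnorm).2 h.le),
        sub_mul, one_mul, div_mul_cancel₀ _ hnorm.ne']
    calc Metric.infDist x (Metric.closedBall c R) ≤ dist x z :=
          Metric.infDist_le_dist_of_mem hzmem
      _ = ‖x - c‖ - R := hdist
      _ ≤ max (‖x - c‖ - R) 0 := le_max_left _ _

end aux

set_option maxHeartbeats 2000000 in
/-- For closed balls with possibly different radii and empty intersection in a
Hilbert space, D(x) = max_i d(x,Ωᵢ) = max_i (‖x-ωᵢ‖ - rᵢ), and D has a unique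
minimizer. -/
theorem unique_min_balls_general_radii
    {X : Type*} [NormedAddCommGroup X] [InnerProductSpace ℝ X] [CompleteSpace X]
    (n : ℕ) (hn : 1 < n) (ω : Fin n → X) (r : Fin n → ℝ) (hr : ∀ i, 0 ≤ r i)
    (hint : (⋂ i, Metric.closedBall (ω i) (r i)) = ∅) :
    (∀ x : X, (Finset.univ.sup' (Finset.univ_nonempty_iff.2 ⟨⟨0, by omega⟩⟩)
        fun i => Metric.infDist x (Metric.closedBall (ω i) (r i))) =
      Finset.univ.sup' (Finset.univ_nonempty_iff.2 ⟨⟨0, by omega⟩⟩)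
        fun i => ‖x - ω i‖ - r i) ∧
    (∃! xbar : X, IsMinOn
      (fun x => Finset.univ.sup' (Finset.univ_nonempty_iff.2 ⟨⟨0, by omega⟩⟩)
        fun i => Metric.infDist x (Metric.closedBall (ω i) (r i))) Set.univ xbar) := by
  have hne : (Finset.univ : Finset (Fin n)).Nonempty :=
    Finset.univ_nonempty_iff.2 ⟨⟨0, by omega⟩⟩
  set D : X → ℝ := fun x =>
    Finset.univ.sup' hne fun i => Metric.infDist x (Metric.closedBall (ω i) (r i)) with hD
  set E : X → ℝ := fun x => Finset.univ.sup' hne fun i => ‖x - ω i‖ - r i with hE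
  -- every point misses some ball
  have hmiss : ∀ x : X, ∃ j, r j < ‖x - ω j‖ := by
    intro x
    have : x ∉ ⋂ i, Metric.closedBall (ω i) (r i) := by rw [hint]; exact Set.notMem_empty x
    rw [Set.mem_iInter] at this
    push_neg at this
    obtain ⟨j, hj⟩ := this
    rw [Metric.mem_closedBall, dist_eq_norm] at hj
    exact ⟨j, by linarith [not_le.1 hj]⟩
  -- Part 1
  have key : ∀ x : X, D x = E x := by
    intro x
    obtain ⟨j, hj⟩ := hmiss x
    have hEpos : 0 < E x :=
      lt_of_lt_of_le (by linarith) (Finset.le_sup' (fun i => ‖x - ω i‖ - r i) (Finset.mem_univ j))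
    apply le_antisymm
    · apply Finset.sup'_le
      intro i _
      refine le_trans (aux_upper (ω i) x (hr i)) (max_le ?_ hEpos.le)
      exact Finset.le_sup' (fun i => ‖x - ω i‖ - r i) (Finset.mem_univ i)
    · apply Finset.sup'_le
      intro i _
      exact le_trans (aux_lower (ω i) x (hr i))
        (Finset.le_sup' (fun i => Metric.infDist x (Metric.closedBall (ω i) (r i)))
          (Finset.mem_univ i))
  refine ⟨key, ?_⟩
  -- Part 2
  have hDnonneg : ∀ x, 0 ≤ D x := by
    intro x
    exact le_trans Metric.infDist_nonneg
      (Finset.le_sup' (fun i => Metric.infDist x (Metric.closedBall (ω i) (r i)))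
        (Finset.mem_univ ⟨0, by omega⟩))
  have hEnonneg : ∀ x, 0 ≤ E x := fun x => (key x) ▸ hDnonneg x
  have hbdd : BddBelow (Set.range E) := ⟨0, by rintro y ⟨x, rfl⟩; exact hEnonneg x⟩
  have hrange : (Set.range E).Nonempty := ⟨E 0, ⟨0, rfl⟩⟩
  set m : ℝ := sInf (Set.range E) with hm
  have hm_le : ∀ x, m ≤ E x := fun x => csInf_le hbdd ⟨x, rfl⟩
  have hm0 : 0 ≤ m := le_csInf hrange (by rintro y ⟨x, rfl⟩; exact hEnonneg x)
  set R : ℝ := Finset.univ.sup' hne r with hR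
  have hrR : ∀ i, r i ≤ R := fun i => Finset.le_sup' r (Finset.mem_univ i)
  have hR0 : 0 ≤ R := le_trans (hr ⟨0, by omega⟩) (hrR _)
  -- Key parallelogram estimate
  have key2 : ∀ x y : X, ‖x - y‖ ^ 2 ≤
      4 * (m + R) * ((E x - m) + (E y - m)) + 2 * (E x - m) ^ 2 + 2 * (E y - m) ^ 2 := by
    intro x y
    set mid : X := ((1:ℝ)/2) • (x + y) with hmiddef
    obtain ⟨i, _, hi⟩ := Finset.exists_mem_eq_sup' hne fun i => ‖mid - ω i‖ - r i
    have hmid : m + r i ≤ ‖mid - ω i‖ := by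
      have h := hm_le mid
      rw [hE] at h
      simp only at h
      rw [hi] at h
      linarith
    have hx1 : ‖x - ω i‖ ≤ E x + r i := by
      have := Finset.le_sup' (fun i => ‖x - ω i‖ - r i) (Finset.mem_univ i)
      rw [hE]; simp only; linarith [this]
    have hy1 : ‖y - ω i‖ ≤ E y + r i := by
      have := Finset.le_sup' (fun i => ‖y - ω i‖ - r i) (Finset.mem_univ i)
      rw [hE]; simp only; linarith [this]
    have par := parallelogram_law_with_norm ℝ (x - ω i) (y - ω i)
    have hsum : (x - ω i) + (y - ω i) = (2 : ℝ) • (mid - ω i) := by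
      rw [hmiddef]; module
    have hsub : (x - ω i) - (y - ω i) = x - y := by abel
    rw [hsum, hsub, norm_smul] at par
    simp only [Real.norm_ofNat] at par
    have h1 : 0 ≤ E x + r i := add_nonneg (hEnonneg x) (hr i)
    have h2 : 0 ≤ E y + r i := add_nonneg (hEnonneg y) (hr i)
    have h3 : 0 ≤ m + r i := add_nonneg hm0 (hr i)
    have hmidsq : (m + r i) ^ 2 ≤ ‖mid - ω i‖ ^ 2 := by nlinarith
    have hxsq : ‖x - ω i‖ ^ 2 ≤ (E x + r i) ^ 2 := by nlinarith [norm_nonneg (x - ω i)]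
    have hysq : ‖y - ω i‖ ^ 2 ≤ (E y + r i) ^ 2 := by nlinarith [norm_nonneg (y - ω i)]
    have par2 : ‖x - y‖ ^ 2 =
        2 * ‖x - ω i‖ ^ 2 + 2 * ‖y - ω i‖ ^ 2 - 4 * ‖mid - ω i‖ ^ 2 := by
      linear_combination par
    have e2 : 2 * (E x + r i) ^ 2 + 2 * (E y + r i) ^ 2 - 4 * (m + r i) ^ 2 ≤
        4 * (m + R) * ((E x - m) + (E y - m)) + 2 * (E x - m) ^ 2 + 2 * (E y - m) ^ 2 := by
      nlinarith [mul_nonneg (sub_nonneg.2 (hrR i))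
        (add_nonneg (sub_nonneg.2 (hm_le x)) (sub_nonneg.2 (hm_le y)))]
    linarith [par2, hmidsq, hxsq, hysq, e2]
  -- minimizing sequence
  have hseq : ∀ k : ℕ, ∃ x : X, E x < m + 1 / (k + 1) := by
    intro k
    have hpos : (0 : ℝ) < 1 / (k + 1) := by positivity
    have : m < m + 1 / (k + 1) := by linarith
    obtain ⟨y, ⟨x, rfl⟩, hy⟩ := (csInf_lt_iff hbdd hrange).1 this
    exact ⟨x, hy⟩
  choose u hu using hseq
  have hu0 : ∀ k : ℕ, 0 ≤ E (u k) - m := fun k => by linarith [hm_le (u k)]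
  have hu1 : ∀ k : ℕ, E (u k) - m < 1 / (k + 1) := fun k => by linarith [hu k]
  -- Cauchy
  have hcauchy : CauchySeq u := by
    rw [Metric.cauchySeq_iff]
    intro ε hε
    set C : ℝ := 8 * (m + R) + 4 with hC
    have hC4 : (4 : ℝ) ≤ C := by simp only [hC]; nlinarith [hm0, hR0]
    set δ : ℝ := min 1 ((ε / 2) ^ 2 / C) with hδ
    have hδpos : 0 < δ :=
      lt_min one_pos (div_pos (pow_pos (by linarith) 2) (by linarith))
    obtain ⟨N, hN⟩ := exists_nat_one_div_lt hδpos
    refine ⟨N, fun p hp q hq => ?_⟩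
    have hbound : ∀ j : ℕ, N ≤ j → E (u j) - m < δ := by
      intro j hj
      refine lt_of_lt_of_le (hu1 j) (le_trans ?_ hN.le)
      apply one_div_le_one_div_of_le (by positivity)
      exact_mod_cast by omega
    have hp1 := hbound p hp
    have hq1 := hbound q hq
    have hδ1 : δ ≤ 1 := min_le_left _ _
    have hδ2 : δ ≤ (ε / 2) ^ 2 / C := min_le_right _ _
    have hsq : ‖u p - u q‖ ^ 2 < ε ^ 2 := by
      have h := key2 (u p) (u q)
      have hδC : C * δ ≤ (ε / 2) ^ 2 := by
        rw [le_div_iff₀ (by linarith : (0:ℝ) < C)] at hδ2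
        linarith
      have hεsq : (ε / 2) ^ 2 < ε ^ 2 := by nlinarith
      nlinarith [hu0 p, hu0 q, hδpos]
    rw [dist_eq_norm]
    exact lt_of_pow_lt_pow_left₀ 2 hε.le hsq
  obtain ⟨xbar, hxbar⟩ := cauchySeq_tendsto_of_complete hcauchy
  -- E (u k) → m and E (u k) → E xbar
  have htendm : Tendsto (fun k => E (u k)) atTop (nhds m) := by
    have h1 : Tendsto (fun k : ℕ => m + 1 / (k + 1 : ℝ)) atTop (nhds m) := by
      have := tendsto_one_div_add_atTop_nhds_zero_nat (𝕜 := ℝ)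
      have h2 := tendsto_const_nhds (x := m) (f := atTop (α := ℕ)) |>.add this
      simpa using h2
    exact tendsto_of_tendsto_of_tendsto_of_le_of_le tendsto_const_nhds h1
      (fun k => hm_le (u k)) (fun k => (hu k).le)
  have htendE : Tendsto (fun k => E (u k)) atTop (nhds (E xbar)) := by
    rw [hE]
    exact Filter.Tendsto.finset_sup'_nhds_apply hne fun i _ =>
      (((continuous_id.sub continuous_const).norm.sub continuous_const).continuousAt).tendsto.comp
        hxbar
  have hExbar : E xbar = m := tendsto_nhds_unique htendE htendm
  refine ⟨xbar, ?_, ?_⟩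
  · intro y _
    simp only [Set.mem_setOf_eq]
    calc D xbar = E xbar := key xbar
      _ = m := hExbar
      _ ≤ E y := hm_le y
      _ = D y := (key y).symm
  · intro y hy
    have h1 : D y ≤ D xbar := hy (Set.mem_univ xbar)
    have h2 : E y = m := le_antisymm (by rw [← key y, ← hExbar, ← key xbar] at *; exact h1)
      (hm_le y)
    have h3 := key2 y xbar
    rw [h2, hExbar] at h3
    have : ‖y - xbar‖ ^ 2 ≤ 0 := by linarith [h3]
    have hnorm : ‖y - xbar‖ = 0 := by nlinarith [norm_nonneg (y - xbar), sq_nonneg ‖y - xbar‖]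
    rw [norm_eq_zero, sub_eq_zero] at hnorm
    exact hnorm
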